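/- Consider an online hierarchical forecasting problem with summing matrices S_t ∈ ℝ^{n_t×d}, features x_t ∈ ℝ^m and responses y_t ∈ ℝ^{n_t} for t ∈ [T]. Let λ > 0 and run MultiVAW-OHF with Λ_t = λ I_{dm}: set X_t = x_tᵀ ⊗ S_t, A_t = λ I_{dm} + Σ_{s=1}^t X_sᵀX_s, b_{t-1} = Σ_{s=1}^{t-1} X_sᵀy_s, θ_t = A_t^{-1}b_{t-1} and predictions ŷ_t = X_tθ_t. Set ȳ = max_t ‖y_t‖₂, x̄ = max_t ‖x_t‖₂ and S̄ = max_t ‖S_t‖_F. Then for every Θ ∈ ℝ^{d×m}: Σ_{t=1}^T ‖ŷ_t − y_t‖₂² − Σ_{t=1}^T ‖S_tΘx_t − y_t‖₂² ≤ λ‖Θ‖_F² + dm ȳ² log( 1 + T x̄² S̄² / (dm λ) ). -/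

import Mathlib

open Matrix Finset

noncomputable section

variable {ι κ : Type*} [Fintype ι] [Fintype κ] [DecidableEq ι]

lemma dot_symm (M : Matrix ι ι ℝ) (hM : M.IsHermitian) (u v : ι → ℝ) :
    u ⬝ᵥ M *ᵥ v = v ⬝ᵥ M *ᵥ u := by
  have hMt : Mᵀ = M := by
    rw [← conjTranspose_eq_transpose_of_trivial]; exact hM.eq
  rw [dotProduct_mulVec, ← hMt, vecMul_transpose, dotProduct_comm, hMt]

lemma mulVec_inv_cancel {M : Matrix ι ι ℝ} (hM : M.PosDef) (v : ι → ℝ) :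
    M *ᵥ (M⁻¹ *ᵥ v) = v := by
  rw [mulVec_mulVec, mul_nonsing_inv _ hM.det_pos.ne'.isUnit, one_mulVec]

lemma quad_lower {M : Matrix ι ι ℝ} (hM : M.PosDef) (v w : ι → ℝ) :
    - (v ⬝ᵥ M⁻¹ *ᵥ v) ≤ w ⬝ᵥ M *ᵥ w - 2 * (v ⬝ᵥ w) := by
  set z := w - M⁻¹ *ᵥ v with hz
  have h0 : 0 ≤ z ⬝ᵥ M *ᵥ z := by
    have := hM.posSemidef.dotProduct_mulVec_nonneg z
    simpa [star_trivial] using this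
  have expand : z ⬝ᵥ M *ᵥ z
      = w ⬝ᵥ M *ᵥ w - 2 * (v ⬝ᵥ w) + v ⬝ᵥ M⁻¹ *ᵥ v := by
    have h1 : (M⁻¹ *ᵥ v) ⬝ᵥ (M *ᵥ w) = v ⬝ᵥ w := by
      rw [dot_symm M hM.isHermitian, mulVec_inv_cancel hM, dotProduct_comm]
    have h2 : (M⁻¹ *ᵥ v) ⬝ᵥ v = v ⬝ᵥ (M⁻¹ *ᵥ v) := dotProduct_comm _ _
    rw [hz, mulVec_sub, dotProduct_sub, sub_dotProduct, sub_dotProduct,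
      mulVec_inv_cancel hM, h1, h2, dotProduct_comm w v]
    ring
  linarith

lemma trace_eq_sum_eigen (M : Matrix ι ι ℝ) (hM : M.IsHermitian) :
    M.trace = ∑ i, hM.eigenvalues i := by
  conv_lhs => rw [hM.spectral_theorem]
  rw [Unitary.conjStarAlgAut_apply, trace_mul_comm, ← mul_assoc, Unitary.coe_star_mul_self, one_mul, trace_diagonal]
  simp [RCLike.ofReal_real_eq_id]

lemma cs_trace_bound (K : Matrix ι κ ℝ) (y : κ → ℝ) :
    (K *ᵥ y) ⬝ᵥ (K *ᵥ y) ≤ (y ⬝ᵥ y) * (K * Kᴴ).trace := by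
  have hL : (K *ᵥ y) ⬝ᵥ (K *ᵥ y) = ∑ p, (∑ i, K p i * y i) ^ 2 := by
    simp [dotProduct, mulVec, sq]
  have hR : (K * Kᴴ).trace = ∑ p, ∑ i, (K p i) ^ 2 := by
    simp [Matrix.trace, Matrix.mul_apply, Matrix.diag, sq]
  rw [hL, hR]
  calc ∑ p, (∑ i, K p i * y i) ^ 2
      ≤ ∑ p, (∑ i, (K p i) ^ 2) * (∑ i, (y i) ^ 2) := by
        refine Finset.sum_le_sum fun p _ => ?_
        exact Finset.sum_mul_sq_le_sq_mul_sq _ _ _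
    _ = (∑ i, (y i) ^ 2) * (∑ p, ∑ i, (K p i) ^ 2) := by rw [← Finset.sum_mul]; ring
    _ = (y ⬝ᵥ y) * (∑ p, ∑ i, (K p i) ^ 2) := by simp [dotProduct, sq]

lemma eigen_pos_of_det_pos {C : Matrix ι ι ℝ} (hC : C.PosSemidef) (hdet : 0 < C.det)
    (i : ι) : 0 < hC.1.eigenvalues i := by
  rcases lt_or_eq_of_le (hC.eigenvalues_nonneg i) with h | h
  · exact h
  · exfalso
    have hprod : C.det = ∏ j, hC.1.eigenvalues j := by
      have := hC.1.det_eq_prod_eigenvalues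
      simpa [RCLike.ofReal_real_eq_id] using this
    have : C.det = 0 := by
      rw [hprod]
      exact Finset.prod_eq_zero (Finset.mem_univ i) h.symm
    exact hdet.ne' this

open scoped MatrixOrder in
lemma sqrt_facts {M : Matrix ι ι ℝ} (hM : M.PosDef) :
    ∃ R : Matrix ι ι ℝ, R.IsHermitian ∧ R * R = M ∧ R⁻¹ * R⁻¹ = M⁻¹ ∧
      R⁻¹.IsHermitian ∧ R.det * R.det = M.det := by
  refine ⟨CFC.sqrt M, (CFC.sqrt_nonneg M).posSemidef.1,
    CFC.sqrt_mul_sqrt_self M hM.posSemidef.nonneg, ?_, ?_, ?_⟩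
  · rw [← Matrix.mul_inv_rev, CFC.sqrt_mul_sqrt_self M hM.posSemidef.nonneg]
  · have := (CFC.sqrt_nonneg M).posSemidef.1
    rw [Matrix.IsHermitian, conjTranspose_nonsing_inv, this.eq]
  · rw [← Matrix.det_mul, CFC.sqrt_mul_sqrt_self M hM.posSemidef.nonneg]

lemma logdet_step {M B : Matrix ι ι ℝ} (hM : M.PosDef) (hB : B.PosDef) :
    (M⁻¹ * (M - B)).trace ≤ Real.log M.det - Real.log B.det := by
  obtain ⟨R, hRH, hRR, hRinv, hRinvH, hRdet⟩ := sqrt_facts hM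
  have hdetM : 0 < M.det := hM.det_pos
  have hdetB : 0 < B.det := hB.det_pos
  have hRdet_ne : R.det ≠ 0 := fun h => hdetM.ne' (by rw [← hRdet, h, zero_mul])
  set C := R⁻¹ᴴ * B * R⁻¹ with hCdef
  have hCps : C.PosSemidef := hB.posSemidef.conjTranspose_mul_mul_same R⁻¹
  have hdetRinv : R⁻¹.det = (R.det)⁻¹ := by
    rw [Matrix.det_nonsing_inv, Ring.inverse_eq_inv']
  have hdetC : C.det = B.det / M.det := by
    rw [hCdef, Matrix.det_mul, Matrix.det_mul, Matrix.det_conjTranspose, star_trivial,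
      hdetRinv, ← hRdet]
    field_simp
  have hdetCpos : 0 < C.det := by rw [hdetC]; positivity
  have htraceC : C.trace = (M⁻¹ * B).trace := by
    rw [hCdef, hRinvH.eq, Matrix.trace_mul_cycle, hRinv]
  -- eigenvalues of C
  set μ := hCps.1.eigenvalues with hμ
  have hμpos : ∀ i, 0 < μ i := eigen_pos_of_det_pos hCps hdetCpos
  have htrsum : C.trace = ∑ i, μ i := trace_eq_sum_eigen C hCps.1
  have hdet_prod : C.det = ∏ i, μ i := by
    have := hCps.1.det_eq_prod_eigenvalues
    simpa [RCLike.ofReal_real_eq_id] using this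
  have hlogdetC : Real.log C.det = ∑ i, Real.log (μ i) := by
    rw [hdet_prod]
    rw [Real.log_prod (fun i _ => (hμpos i).ne')]
  have hsumineq : (Fintype.card ι : ℝ) - ∑ i, μ i ≤ - ∑ i, Real.log (μ i) := by
    have : ∀ i ∈ Finset.univ (α := ι), (1 : ℝ) - μ i ≤ - Real.log (μ i) := fun i _ => by
      have := Real.log_le_sub_one_of_pos (hμpos i)
      linarith
    have h := Finset.sum_le_sum this
    simpa [Finset.sum_sub_distrib, ← Finset.sum_neg_distrib] using h
  have hlhs : (M⁻¹ * (M - B)).trace = (Fintype.card ι : ℝ) - C.trace := by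
    rw [Matrix.mul_sub, Matrix.trace_sub,
      Matrix.nonsing_inv_mul _ hM.det_pos.ne'.isUnit, Matrix.trace_one, htraceC]
  rw [hlhs, htrsum]
  have : Real.log C.det = Real.log B.det - Real.log M.det := by
    rw [hdetC, Real.log_div hdetB.ne' hdetM.ne']
  rw [hlogdetC] at this
  linarith [hsumineq]

lemma logdet_le_card_log_trace [Nonempty ι] {M : Matrix ι ι ℝ} (hM : M.PosDef) :
    Real.log M.det ≤ (Fintype.card ι : ℝ) *
      Real.log (M.trace / (Fintype.card ι : ℝ)) := by
  set μ := hM.1.eigenvalues with hμ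
  have hμpos : ∀ i, 0 < μ i := hM.eigenvalues_pos
  have hcard : (0 : ℝ) < (Fintype.card ι : ℝ) := by
    exact_mod_cast Fintype.card_pos
  have htr : M.trace = ∑ i, μ i := trace_eq_sum_eigen M hM.1
  have htrpos : 0 < M.trace := by
    rw [htr]; exact Finset.sum_pos (fun i _ => hμpos i) Finset.univ_nonempty
  set a := M.trace / (Fintype.card ι : ℝ) with ha
  have hapos : 0 < a := by rw [ha]; exact div_pos htrpos hcard
  have hdet_prod : M.det = ∏ i, μ i := by
    have := hM.1.det_eq_prod_eigenvalues
    simpa [RCLike.ofReal_real_eq_id] using this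
  have hlog : Real.log M.det = ∑ i, Real.log (μ i) := by
    rw [hdet_prod, Real.log_prod (fun i _ => (hμpos i).ne')]
  have key : ∀ i ∈ Finset.univ (α := ι), Real.log (μ i) ≤ Real.log a + (μ i / a - 1) := by
    intro i _
    have h1 : Real.log (μ i / a) ≤ μ i / a - 1 :=
      Real.log_le_sub_one_of_pos (div_pos (hμpos i) hapos)
    have h2 : Real.log (μ i) = Real.log a + Real.log (μ i / a) := by
      rw [Real.log_div (hμpos i).ne' hapos.ne']
      ring
    linarith
  have hsum := Finset.sum_le_sum key
  rw [hlog]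
  have hsum2 : ∑ i, (Real.log a + (μ i / a - 1))
      = (Fintype.card ι : ℝ) * Real.log a + ((∑ i, μ i) / a - (Fintype.card ι : ℝ)) := by
    rw [Finset.sum_add_distrib, Finset.sum_sub_distrib]
    simp [Finset.sum_div, Finset.card_univ, mul_comm]
  have hma : (∑ i, μ i) / a = (Fintype.card ι : ℝ) := by
    rw [← htr, ha]
    field_simp
  rw [hsum2, hma] at hsum
  linarith

lemma dot_Gram (Xm : Matrix κ ι ℝ) (u w : ι → ℝ) :
    u ⬝ᵥ ((Xmᵀ * Xm) *ᵥ w) = (Xm *ᵥ u) ⬝ᵥ (Xm *ᵥ w) := by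
  rw [← mulVec_mulVec, dotProduct_mulVec, vecMul_transpose]

section Defs

variable {N : Type*} [Fintype N] [DecidableEq N] {n : ℕ → ℕ}

def Amat (lam : ℝ) (X : (t : ℕ) → Matrix (Fin (n t)) N ℝ) (t : ℕ) : Matrix N N ℝ :=
  lam • 1 + ∑ s ∈ Icc 1 t, (X s)ᵀ * X s

def bvec (X : (t : ℕ) → Matrix (Fin (n t)) N ℝ) (y : (t : ℕ) → Fin (n t) → ℝ)
    (t : ℕ) : N → ℝ :=
  ∑ s ∈ Icc 1 t, (X s)ᵀ *ᵥ y s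

def cval (y : (t : ℕ) → Fin (n t) → ℝ) (t : ℕ) : ℝ := ∑ s ∈ Icc 1 t, y s ⬝ᵥ y s

def Psi (lam : ℝ) (X : (t : ℕ) → Matrix (Fin (n t)) N ℝ)
    (y : (t : ℕ) → Fin (n t) → ℝ) (t : ℕ) : ℝ :=
  cval y t - bvec X y t ⬝ᵥ ((Amat lam X t)⁻¹ *ᵥ bvec X y t)

def qval (lam : ℝ) (X : (t : ℕ) → Matrix (Fin (n t)) N ℝ)
    (y : (t : ℕ) → Fin (n t) → ℝ) (t : ℕ) : ℝ :=
  ((X t)ᵀ *ᵥ y t) ⬝ᵥ ((Amat lam X t)⁻¹ *ᵥ ((X t)ᵀ *ᵥ y t))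

variable {lam : ℝ} (X : (t : ℕ) → Matrix (Fin (n t)) N ℝ) (y : (t : ℕ) → Fin (n t) → ℝ)

lemma gram_posSemidef (s : ℕ) : ((X s)ᵀ * X s).PosSemidef := by
  have h : (X s)ᵀ * X s = (X s)ᴴ * X s := by
    rw [conjTranspose_eq_transpose_of_trivial]
  rw [h]; exact posSemidef_conjTranspose_mul_self _

lemma Amat_pos (hlam : 0 < lam) (t : ℕ) : (Amat lam X t).PosDef := by
  have h1 : (lam • (1 : Matrix N N ℝ)).PosDef := by
    rw [smul_one_eq_diagonal]
    exact Matrix.PosDef.diagonal (fun _ => hlam)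
  have h2 : (∑ s ∈ Icc 1 t, (X s)ᵀ * X s).PosSemidef := by
    apply Finset.sum_induction _ _ (fun a b ha hb => ha.add hb)
      ((Matrix.PosSemidef.zero) : (0 : Matrix N N ℝ).PosSemidef)
    exact fun s _ => gram_posSemidef X s
  exact h1.add_posSemidef h2

lemma Amat_succ (lam : ℝ) (k : ℕ) :
    Amat lam X (k + 1) = Amat lam X k + (X (k+1))ᵀ * X (k+1) := by
  rw [Amat, Amat, Finset.sum_Icc_succ_top (Nat.le_add_left 1 k), add_assoc]

lemma bvec_succ (k : ℕ) :
    bvec X y (k + 1) = bvec X y k + (X (k+1))ᵀ *ᵥ y (k+1) := by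
  rw [bvec, bvec, Finset.sum_Icc_succ_top (Nat.le_add_left 1 k)]

lemma cval_succ (k : ℕ) : cval y (k + 1) = cval y k + y (k+1) ⬝ᵥ y (k+1) := by
  rw [cval, cval, Finset.sum_Icc_succ_top (Nat.le_add_left 1 k)]

lemma Psi_zero : Psi lam X y 0 = 0 := by
  simp [Psi, cval, bvec]


lemma step_ineq (hlam : 0 < lam) (k : ℕ) :
    ∑ i, ((X (k+1) *ᵥ ((Amat lam X (k+1))⁻¹ *ᵥ bvec X y k)) i - y (k+1) i)^2
      ≤ (Psi lam X y (k+1) - Psi lam X y k) + qval lam X y (k+1) := by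
  set θt : N → ℝ := (Amat lam X (k+1))⁻¹ *ᵥ bvec X y k with hθt
  set v : N → ℝ := (X (k+1))ᵀ *ᵥ y (k+1) with hv
  set β : N → ℝ := bvec X y k with hβ
  have hMpos := Amat_pos X hlam (k+1)
  have hMinvH : ((Amat lam X (k+1))⁻¹).IsHermitian := hMpos.inv.isHermitian
  have hAθ : Amat lam X (k+1) *ᵥ θt = β := by
    rw [hθt]; exact mulVec_inv_cancel hMpos β
  have hvθ : y (k+1) ⬝ᵥ (X (k+1) *ᵥ θt) = v ⬝ᵥ θt := by
    rw [dotProduct_mulVec, ← mulVec_transpose, hv]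
  -- loss expansion
  have e_loss : ∑ i, ((X (k+1) *ᵥ θt) i - y (k+1) i)^2
      = θt ⬝ᵥ (((X (k+1))ᵀ * X (k+1)) *ᵥ θt) - 2*(v ⬝ᵥ θt) + y (k+1) ⬝ᵥ y (k+1) := by
    have h1 : ∑ i, ((X (k+1) *ᵥ θt) i - y (k+1) i)^2
        = (X (k+1) *ᵥ θt - y (k+1)) ⬝ᵥ (X (k+1) *ᵥ θt - y (k+1)) := by
      simp [dotProduct, sq]
    rw [h1, sub_dotProduct, dotProduct_sub, dotProduct_sub, dot_Gram,
      dotProduct_comm (X (k+1) *ᵥ θt) (y (k+1)), hvθ]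
    ring
  -- quadratic lower bound at time k
  have hquad : - (β ⬝ᵥ ((Amat lam X k)⁻¹ *ᵥ β))
      ≤ θt ⬝ᵥ (Amat lam X k *ᵥ θt) - 2 * (β ⬝ᵥ θt) :=
    quad_lower (Amat_pos X hlam k) β θt
  -- decomposition of the middle quadratic form
  have e_mid : θt ⬝ᵥ (Amat lam X k *ᵥ θt)
      = β ⬝ᵥ θt - θt ⬝ᵥ (((X (k+1))ᵀ * X (k+1)) *ᵥ θt) := by
    have h2 : Amat lam X k = Amat lam X (k+1) - (X (k+1))ᵀ * X (k+1) := by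
      rw [Amat_succ, add_sub_cancel_right]
    rw [h2, sub_mulVec, dotProduct_sub, hAθ, dotProduct_comm]
  -- expansion of Psi (k+1)
  have e_b : bvec X y (k+1) = β + v := by rw [bvec_succ, hβ, hv]
  have e_bsq : bvec X y (k+1) ⬝ᵥ ((Amat lam X (k+1))⁻¹ *ᵥ bvec X y (k+1))
      = β ⬝ᵥ θt + 2*(v ⬝ᵥ θt) + qval lam X y (k+1) := by
    rw [e_b, mulVec_add, dotProduct_add, add_dotProduct, add_dotProduct]
    have hsymm : β ⬝ᵥ ((Amat lam X (k+1))⁻¹ *ᵥ v) = v ⬝ᵥ ((Amat lam X (k+1))⁻¹ *ᵥ β) :=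
      dot_symm _ hMinvH β v
    rw [hsymm, ← hθt, qval, ← hv]
    ring
  have e_c : cval y (k+1) = cval y k + y (k+1) ⬝ᵥ y (k+1) := cval_succ y k
  have ePsi1 : Psi lam X y (k+1)
      = cval y k + y (k+1) ⬝ᵥ y (k+1) - (β ⬝ᵥ θt + 2*(v ⬝ᵥ θt) + qval lam X y (k+1)) := by
    rw [Psi, e_c, e_bsq]
  have ePsi0 : Psi lam X y k = cval y k - β ⬝ᵥ ((Amat lam X k)⁻¹ *ᵥ β) := by
    rw [Psi, hβ]
  rw [e_loss, ePsi1, ePsi0]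
  have := hquad
  rw [e_mid] at this
  linarith


lemma telescope_Icc (f : ℕ → ℝ) (T : ℕ) :
    ∑ t ∈ Icc 1 T, (f t - f (t-1)) = f T - f 0 := by
  rw [← Finset.Ico_add_one_right_eq_Icc, Finset.sum_Ico_eq_sum_range]
  try simp only [Nat.add_sub_cancel, Nat.succ_sub_one]
  have h : ∀ i, f (1+i) - f (1+i-1) = f (i+1) - f i := fun i => by
    rw [Nat.add_comm 1 i]; simp
  rw [Finset.sum_congr rfl fun i _ => h i, Finset.sum_range_sub]

lemma total_bound (hlam : 0 < lam) (T : ℕ)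
    (pred : (t : ℕ) → Fin (n t) → ℝ)
    (hpred : ∀ t ∈ Icc 1 T, pred t = X t *ᵥ ((Amat lam X t)⁻¹ *ᵥ bvec X y (t-1))) :
    ∑ t ∈ Icc 1 T, ∑ i, (pred t i - y t i)^2
      ≤ Psi lam X y T + ∑ t ∈ Icc 1 T, qval lam X y t := by
  have hstep : ∀ t ∈ Icc 1 T, ∑ i, (pred t i - y t i)^2
      ≤ (Psi lam X y t - Psi lam X y (t-1)) + qval lam X y t := by
    intro t ht
    obtain ⟨ht1, htT⟩ := Finset.mem_Icc.mp ht
    obtain ⟨k, rfl⟩ : ∃ k, t = k + 1 := ⟨t - 1, (Nat.succ_pred_eq_of_pos ht1).symm⟩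
    have h := step_ineq X y hlam k
    rw [hpred _ ht]
    simpa using h
  calc ∑ t ∈ Icc 1 T, ∑ i, (pred t i - y t i)^2
      ≤ ∑ t ∈ Icc 1 T, ((Psi lam X y t - Psi lam X y (t-1)) + qval lam X y t) :=
        Finset.sum_le_sum hstep
    _ = (∑ t ∈ Icc 1 T, (Psi lam X y t - Psi lam X y (t-1)))
          + ∑ t ∈ Icc 1 T, qval lam X y t := Finset.sum_add_distrib
    _ = Psi lam X y T + ∑ t ∈ Icc 1 T, qval lam X y t := by
        rw [telescope_Icc, Psi_zero, sub_zero]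

lemma sum_mulVec'' {β : Type*} (s : Finset β) (f : β → Matrix ι κ ℝ) (v : κ → ℝ) :
    (∑ t ∈ s, f t) *ᵥ v = ∑ t ∈ s, f t *ᵥ v := by
  ext i
  simp only [mulVec, dotProduct, Finset.sum_apply, Matrix.sum_apply, Finset.sum_mul]
  rw [Finset.sum_comm]

lemma dotProduct_sum'' {β : Type*} (s : Finset β) (u : ι → ℝ) (f : β → ι → ℝ) :
    u ⬝ᵥ (∑ t ∈ s, f t) = ∑ t ∈ s, u ⬝ᵥ f t := by
  simp only [dotProduct, Finset.sum_apply, Finset.mul_sum]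
  rw [Finset.sum_comm]

lemma sum_dotProduct'' {β : Type*} (s : Finset β) (u : ι → ℝ) (f : β → ι → ℝ) :
    (∑ t ∈ s, f t) ⬝ᵥ u = ∑ t ∈ s, f t ⬝ᵥ u := by
  rw [dotProduct_comm, dotProduct_sum'']
  exact Finset.sum_congr rfl fun t _ => dotProduct_comm _ _

lemma comparator (hlam : 0 < lam) (T : ℕ) (θc : N → ℝ) :
    Psi lam X y T ≤ lam * (θc ⬝ᵥ θc)
      + ∑ t ∈ Icc 1 T, ∑ i, ((X t *ᵥ θc) i - y t i)^2 := by
  have hq := quad_lower (Amat_pos X hlam T) (bvec X y T) θc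
  have e1 : θc ⬝ᵥ (Amat lam X T *ᵥ θc)
      = lam * (θc ⬝ᵥ θc) + ∑ t ∈ Icc 1 T, θc ⬝ᵥ (((X t)ᵀ * X t) *ᵥ θc) := by
    rw [Amat, add_mulVec, dotProduct_add, smul_mulVec, one_mulVec,
      dotProduct_smul, smul_eq_mul, sum_mulVec'', dotProduct_sum'']
  have e2 : bvec X y T ⬝ᵥ θc = ∑ t ∈ Icc 1 T, y t ⬝ᵥ (X t *ᵥ θc) := by
    rw [bvec, sum_dotProduct'']
    exact Finset.sum_congr rfl fun t _ => by
      rw [mulVec_transpose, ← dotProduct_mulVec]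
  have e3 : ∀ t, ∑ i, ((X t *ᵥ θc) i - y t i)^2
      = θc ⬝ᵥ (((X t)ᵀ * X t) *ᵥ θc) - 2*(y t ⬝ᵥ (X t *ᵥ θc)) + y t ⬝ᵥ y t := by
    intro t
    have h1 : ∑ i, ((X t *ᵥ θc) i - y t i)^2
        = (X t *ᵥ θc - y t) ⬝ᵥ (X t *ᵥ θc - y t) := by simp [dotProduct, sq]
    rw [h1, sub_dotProduct, dotProduct_sub, dotProduct_sub, dot_Gram,
      dotProduct_comm (X t *ᵥ θc) (y t)]
    ring
  have efin : cval y T + θc ⬝ᵥ (Amat lam X T *ᵥ θc) - 2*(bvec X y T ⬝ᵥ θc)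
      = lam * (θc ⬝ᵥ θc) + ∑ t ∈ Icc 1 T,
          (θc ⬝ᵥ (((X t)ᵀ * X t) *ᵥ θc) - 2*(y t ⬝ᵥ (X t *ᵥ θc)) + y t ⬝ᵥ y t) := by
    rw [e1, e2, cval]
    simp only [Finset.sum_add_distrib, Finset.sum_sub_distrib, ← Finset.mul_sum]
    ring
  calc Psi lam X y T
      ≤ cval y T + θc ⬝ᵥ (Amat lam X T *ᵥ θc) - 2*(bvec X y T ⬝ᵥ θc) := by
        rw [Psi]; linarith
    _ = lam * (θc ⬝ᵥ θc) + ∑ t ∈ Icc 1 T,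
          (θc ⬝ᵥ (((X t)ᵀ * X t) *ᵥ θc) - 2*(y t ⬝ᵥ (X t *ᵥ θc)) + y t ⬝ᵥ y t) := efin
    _ = lam * (θc ⬝ᵥ θc) + ∑ t ∈ Icc 1 T, ∑ i, ((X t *ᵥ θc) i - y t i)^2 := by
        rw [Finset.sum_congr rfl fun t _ => (e3 t).symm]


lemma dot_self_nonneg' (u : κ → ℝ) : 0 ≤ u ⬝ᵥ u := by
  have h : u ⬝ᵥ u = ∑ i, (u i)^2 := by simp [dotProduct, sq]
  rw [h]; positivity

lemma trace_gram_nonneg (s : ℕ) : 0 ≤ ((X s)ᵀ * X s).trace := by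
  have h : ((X s)ᵀ * X s).trace = ∑ p, ∑ i, (X s i p)^2 := by
    simp [Matrix.trace, Matrix.diag, Matrix.mul_apply, sq]
  rw [h]; positivity

lemma qval_le (hlam : 0 < lam) (t : ℕ) :
    qval lam X y t ≤ (y t ⬝ᵥ y t) * ((Amat lam X t)⁻¹ * ((X t)ᵀ * X t)).trace
    ∧ 0 ≤ ((Amat lam X t)⁻¹ * ((X t)ᵀ * X t)).trace := by
  obtain ⟨R, hRH, hRR, hRinv, hRinvH, hRdet⟩ := sqrt_facts (Amat_pos X hlam t)
  set K : Matrix N (Fin (n t)) ℝ := R⁻¹ * (X t)ᵀ with hK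
  have hKy : K *ᵥ y t = R⁻¹ *ᵥ ((X t)ᵀ *ᵥ y t) := by rw [hK, ← mulVec_mulVec]
  have hqK : qval lam X y t = (K *ᵥ y t) ⬝ᵥ (K *ᵥ y t) := by
    rw [qval, ← hRinv, ← mulVec_mulVec, dot_symm R⁻¹ hRinvH, hKy]
  have hKH : Kᴴ = X t * R⁻¹ := by
    rw [hK, conjTranspose_mul, hRinvH.eq, conjTranspose_eq_transpose_of_trivial,
      transpose_transpose]
  have htrK : (K * Kᴴ).trace = ((Amat lam X t)⁻¹ * ((X t)ᵀ * X t)).trace := by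
    rw [hKH, hK, trace_mul_comm, Matrix.mul_assoc, ← Matrix.mul_assoc R⁻¹ R⁻¹ ((X t)ᵀ),
      hRinv, trace_mul_comm (X t) ((Amat lam X t)⁻¹ * (X t)ᵀ), Matrix.mul_assoc]
  constructor
  · rw [hqK, ← htrK]
    exact cs_trace_bound K (y t)
  · rw [← htrK]
    have : (K * Kᴴ).trace = ∑ p, ∑ i, (K p i)^2 := by
      simp [Matrix.trace, Matrix.mul_apply, Matrix.diag, sq]
    rw [this]
    positivity

lemma qsum_le (hlam : 0 < lam) (T : ℕ) (Y2 : ℝ)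
    (hY2 : ∀ t ∈ Icc 1 T, y t ⬝ᵥ y t ≤ Y2) :
    ∑ t ∈ Icc 1 T, qval lam X y t
      ≤ Y2 * (Real.log (Amat lam X T).det - Real.log (Amat lam X 0).det) := by
  have h1 : ∀ t ∈ Icc 1 T, qval lam X y t
      ≤ Y2 * ((Amat lam X t)⁻¹ * ((X t)ᵀ * X t)).trace := by
    intro t ht
    obtain ⟨hle, hnn⟩ := qval_le X y hlam t
    calc qval lam X y t ≤ (y t ⬝ᵥ y t) * ((Amat lam X t)⁻¹ * ((X t)ᵀ * X t)).trace := hle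
      _ ≤ Y2 * ((Amat lam X t)⁻¹ * ((X t)ᵀ * X t)).trace :=
          mul_le_mul_of_nonneg_right (hY2 t ht) hnn
  have h2 : ∀ t ∈ Icc 1 T, ((Amat lam X t)⁻¹ * ((X t)ᵀ * X t)).trace
      ≤ Real.log (Amat lam X t).det - Real.log (Amat lam X (t-1)).det := by
    intro t ht
    obtain ⟨ht1, htT⟩ := Finset.mem_Icc.mp ht
    obtain ⟨k, rfl⟩ : ∃ k, t = k + 1 := ⟨t - 1, (Nat.succ_pred_eq_of_pos ht1).symm⟩
    have hsub : (X (k+1))ᵀ * X (k+1) = Amat lam X (k+1) - Amat lam X k := by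
      rw [Amat_succ]; exact (add_sub_cancel_left _ _).symm
    have := logdet_step (Amat_pos X hlam (k+1)) (Amat_pos X hlam k)
    rw [hsub]
    simpa using this
  rcases Nat.eq_zero_or_pos T with rfl | hTpos
  · simp
  have hY2nn : 0 ≤ Y2 := by
    have h := hY2 1 (Finset.mem_Icc.mpr ⟨le_refl 1, hTpos⟩)
    have h2 := dot_self_nonneg' (y 1)
    linarith
  calc ∑ t ∈ Icc 1 T, qval lam X y t
      ≤ ∑ t ∈ Icc 1 T, Y2 * ((Amat lam X t)⁻¹ * ((X t)ᵀ * X t)).trace :=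
        Finset.sum_le_sum h1
    _ = Y2 * ∑ t ∈ Icc 1 T, ((Amat lam X t)⁻¹ * ((X t)ᵀ * X t)).trace := by
        rw [Finset.mul_sum]
    _ ≤ Y2 * ∑ t ∈ Icc 1 T,
          (Real.log (Amat lam X t).det - Real.log (Amat lam X (t-1)).det) :=
        mul_le_mul_of_nonneg_left (Finset.sum_le_sum h2) hY2nn
    _ = Y2 * (Real.log (Amat lam X T).det - Real.log (Amat lam X 0).det) := by
        rw [telescope_Icc (fun t => Real.log (Amat lam X t).det)]


lemma Amat_trace (t : ℕ) :
    (Amat lam X t).trace = lam * (Fintype.card N : ℝ)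
      + ∑ s ∈ Icc 1 t, ((X s)ᵀ * X s).trace := by
  rw [Amat, trace_add, trace_smul, trace_one, trace_sum, smul_eq_mul]

lemma logdet_final [Nonempty N] (hlam : 0 < lam) (T : ℕ) (B : ℝ) (hB : 0 ≤ B)
    (htr : (Amat lam X T).trace ≤ lam * (Fintype.card N : ℝ) + B) :
    Real.log (Amat lam X T).det - Real.log (Amat lam X 0).det
      ≤ (Fintype.card N : ℝ) * Real.log (1 + B / ((Fintype.card N : ℝ) * lam)) := by
  set κc : ℝ := (Fintype.card N : ℝ) with hκc
  have hκpos : (0:ℝ) < κc := by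
    rw [hκc]; exact_mod_cast Fintype.card_pos
  have hdet0 : Real.log (Amat lam X 0).det = κc * Real.log lam := by
    have he : Icc 1 0 = (∅ : Finset ℕ) := by simp
    have h0 : (Amat lam X 0) = lam • (1 : Matrix N N ℝ) := by
      rw [Amat, he, Finset.sum_empty, add_zero]
    rw [h0, smul_one_eq_diagonal, det_diagonal, Finset.prod_const, Finset.card_univ,
      Real.log_pow, hκc]
  have htrlow : lam * κc ≤ (Amat lam X T).trace := by
    rw [Amat_trace]
    have : 0 ≤ ∑ s ∈ Icc 1 T, ((X s)ᵀ * X s).trace :=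
      Finset.sum_nonneg fun s _ => trace_gram_nonneg X s
    linarith
  have htrpos : 0 < (Amat lam X T).trace := lt_of_lt_of_le (by positivity) htrlow
  have hub := logdet_le_card_log_trace (Amat_pos X hlam T)
  rw [← hκc] at hub
  have h3 : Real.log ((Amat lam X T).trace / κc) - Real.log lam
      = Real.log ((Amat lam X T).trace / (κc * lam)) := by
    rw [Real.log_div htrpos.ne' hκpos.ne', Real.log_div htrpos.ne' (by positivity),
      Real.log_mul hκpos.ne' hlam.ne']
    ring
  have h4 : (Amat lam X T).trace / (κc * lam) ≤ 1 + B / (κc * lam) := by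
    rw [div_le_iff₀ (by positivity)]
    have : (1 + B / (κc * lam)) * (κc * lam) = κc * lam + B := by
      field_simp
    rw [this]
    calc (Amat lam X T).trace ≤ lam * κc + B := htr
      _ = κc * lam + B := by ring
  have h5 : Real.log ((Amat lam X T).trace / (κc * lam))
      ≤ Real.log (1 + B / (κc * lam)) :=
    Real.log_le_log (by positivity) h4
  calc Real.log (Amat lam X T).det - Real.log (Amat lam X 0).det
      = Real.log (Amat lam X T).det - κc * Real.log lam := by rw [hdet0]
    _ ≤ κc * Real.log ((Amat lam X T).trace / κc) - κc * Real.log lam := by linarith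
    _ = κc * (Real.log ((Amat lam X T).trace / κc) - Real.log lam) := by ring
    _ = κc * Real.log ((Amat lam X T).trace / (κc * lam)) := by rw [h3]
    _ ≤ κc * Real.log (1 + B / (κc * lam)) :=
        mul_le_mul_of_nonneg_left h5 hκpos.le


lemma trace_gram_eq (Xm : Matrix κ ι ℝ) [DecidableEq ι]:
    (Xmᵀ * Xm).trace = ∑ p, ∑ i, (Xm i p)^2 := by
  simp [Matrix.trace, Matrix.diag, Matrix.mul_apply, sq]

end Defs

/-- **Regret bound for MultiVAW-OHF with standard regularization `Λ_t = λ I_{dm}`**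
(Corollary 3, item 1).  With `X_t = x_tᵀ ⊗ S_t` (realized as the `n_t × (m·d)`
matrix with entry `(i, (j,l)) ↦ x_t j * (S_t) i l`),
`A_t = λ I_{dm} + ∑_{s≤t} XₛᵀXₛ`, `b_{t-1} = ∑_{s<t} Xₛᵀyₛ`,
iterates `θ_t = A_t⁻¹ b_{t-1}`, predictions `ŷ_t = X_t θ_t`, and
`ȳ = max ‖y_t‖₂`, `x̄ = max ‖x_t‖₂`, `S̄ = max ‖S_t‖_F`, the regret against any
`Θ ∈ ℝ^{d×m}` is at most `λ‖Θ‖_F² + dm ȳ² log(1 + T x̄² S̄² / (dm λ))`. -/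
theorem multivaw_ohf_regret_bound
    (T d m : ℕ) (hT : 1 ≤ T)
    (n : ℕ → ℕ)
    (S : (t : ℕ) → Matrix (Fin (n t)) (Fin d) ℝ)
    (x : ℕ → Fin m → ℝ)
    (y : (t : ℕ) → Fin (n t) → ℝ)
    (lam : ℝ) (hlam : 0 < lam)
    (X : (t : ℕ) → Matrix (Fin (n t)) (Fin m × Fin d) ℝ)
    (hX : ∀ t ∈ Icc 1 T, X t = Matrix.of fun i p => x t p.1 * S t i p.2)
    (A : ℕ → Matrix (Fin m × Fin d) (Fin m × Fin d) ℝ)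
    (hA : ∀ t ∈ Icc 1 T,
      A t = lam • (1 : Matrix (Fin m × Fin d) (Fin m × Fin d) ℝ)
        + ∑ s ∈ Icc 1 t, (X s)ᵀ * X s)
    (b : ℕ → (Fin m × Fin d → ℝ))
    (hb : ∀ t ≤ T, b t = ∑ s ∈ Icc 1 t, (X s)ᵀ.mulVec (y s))
    (θ : ℕ → (Fin m × Fin d → ℝ))
    (hθ : ∀ t ∈ Icc 1 T, θ t = (A t)⁻¹.mulVec (b (t - 1)))
    (yhat : (t : ℕ) → Fin (n t) → ℝ)
    (hyhat : ∀ t ∈ Icc 1 T, yhat t = (X t).mulVec (θ t))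
    (ybar xbar Sbar : ℝ)
    (hybar : ybar = (Icc 1 T).sup' (Finset.nonempty_Icc.mpr hT)
      (fun t => Real.sqrt (∑ i, (y t i) ^ 2)))
    (hxbar : xbar = (Icc 1 T).sup' (Finset.nonempty_Icc.mpr hT)
      (fun t => Real.sqrt (∑ j, (x t j) ^ 2)))
    (hSbar : Sbar = (Icc 1 T).sup' (Finset.nonempty_Icc.mpr hT)
      (fun t => Real.sqrt (∑ i, ∑ l, (S t i l) ^ 2)))
    (Θ : Matrix (Fin d) (Fin m) ℝ) :
    (∑ t ∈ Icc 1 T, ∑ i, (yhat t i - y t i) ^ 2)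
      - ∑ t ∈ Icc 1 T, ∑ i, ((S t * Θ).mulVec (x t) i - y t i) ^ 2
    ≤ lam * (∑ i, ∑ j, (Θ i j) ^ 2)
        + (d : ℝ) * m * ybar ^ 2
          * Real.log (1 + (T : ℝ) * xbar ^ 2 * Sbar ^ 2 / ((d : ℝ) * m * lam)) := by
  rcases Nat.eq_zero_or_pos m with hm | hm
  · subst hm
    have h1 : ∀ t ∈ Icc 1 T, ∀ i, yhat t i = 0 := by
      intro t ht i
      rw [hyhat t ht]
      simp [Matrix.mulVec, dotProduct]
    have h2 : ∀ t, ∀ i, (S t * Θ).mulVec (x t) i = 0 := by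
      intro t i; simp [Matrix.mulVec, dotProduct]
    have e : (∑ t ∈ Icc 1 T, ∑ i, (yhat t i - y t i) ^ 2)
        = ∑ t ∈ Icc 1 T, ∑ i, ((S t * Θ).mulVec (x t) i - y t i) ^ 2 :=
      Finset.sum_congr rfl fun t ht => Finset.sum_congr rfl fun i _ => by
        rw [h1 t ht i, h2 t i]
    rw [e, sub_self]
    simp
  rcases Nat.eq_zero_or_pos d with hd | hd
  · subst hd
    have h1 : ∀ t ∈ Icc 1 T, ∀ i, yhat t i = 0 := by
      intro t ht i
      rw [hyhat t ht]
      simp [Matrix.mulVec, dotProduct]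
    have h2 : ∀ t, ∀ i, (S t * Θ).mulVec (x t) i = 0 := by
      intro t i; simp [Matrix.mulVec, dotProduct, Matrix.mul_apply]
    have e : (∑ t ∈ Icc 1 T, ∑ i, (yhat t i - y t i) ^ 2)
        = ∑ t ∈ Icc 1 T, ∑ i, ((S t * Θ).mulVec (x t) i - y t i) ^ 2 :=
      Finset.sum_congr rfl fun t ht => Finset.sum_congr rfl fun i _ => by
        rw [h1 t ht i, h2 t i]
    rw [e, sub_self]
    simp
  -- main case
  haveI : Nonempty (Fin m) := ⟨⟨0, hm⟩⟩
  haveI : Nonempty (Fin d) := ⟨⟨0, hd⟩⟩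
  have hAA' : ∀ t ∈ Icc 1 T, A t = Amat lam X t := fun t ht => by
    rw [hA t ht, Amat]
  have hbb : ∀ t ≤ T, b t = bvec X y t := fun t ht => by
    rw [hb t ht, bvec]
  have hpred : ∀ t ∈ Icc 1 T, yhat t = X t *ᵥ ((Amat lam X t)⁻¹ *ᵥ bvec X y (t-1)) := by
    intro t ht
    obtain ⟨ht1, htT⟩ := Finset.mem_Icc.mp ht
    rw [hyhat t ht, hθ t ht, hAA' t ht, hbb (t-1) ((Nat.sub_le t 1).trans htT)]
  have total := total_bound X y hlam T yhat hpred
  -- comparator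
  set θbar : Fin m × Fin d → ℝ := fun p => Θ p.2 p.1 with hθbar
  have comp := comparator X y hlam T θbar
  have hθθ : θbar ⬝ᵥ θbar = ∑ i, ∑ j, (Θ i j)^2 := by
    simp only [hθbar, dotProduct, Fintype.sum_prod_type, sq]
    rw [Finset.sum_comm]
  have hXθ : ∀ t ∈ Icc 1 T, X t *ᵥ θbar = (S t * Θ) *ᵥ x t := by
    intro t ht
    ext i
    rw [hX t ht]
    simp only [hθbar, Matrix.mulVec, dotProduct, Matrix.mul_apply, Matrix.of_apply,
      Fintype.sum_prod_type, Finset.sum_mul]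
    exact Finset.sum_congr rfl fun j _ => Finset.sum_congr rfl fun l _ => by ring
  have hcompsum : ∑ t ∈ Icc 1 T, ∑ i, ((X t *ᵥ θbar) i - y t i)^2
      = ∑ t ∈ Icc 1 T, ∑ i, ((S t * Θ).mulVec (x t) i - y t i)^2 :=
    Finset.sum_congr rfl fun t ht => by rw [hXθ t ht]
  rw [hθθ, hcompsum] at comp
  -- q-sum bound
  have hyT : ∀ t ∈ Icc 1 T, y t ⬝ᵥ y t ≤ ybar^2 := by
    intro t ht
    have hle : Real.sqrt (∑ i, (y t i)^2) ≤ ybar := by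
      rw [hybar]; exact Finset.le_sup' (fun t => Real.sqrt (∑ i, (y t i) ^ 2)) ht
    have hnn : (0:ℝ) ≤ ∑ i, (y t i)^2 := by positivity
    have hyy : y t ⬝ᵥ y t = ∑ i, (y t i)^2 := by simp [dotProduct, sq]
    calc y t ⬝ᵥ y t = Real.sqrt (∑ i, (y t i)^2) ^ 2 := by
          rw [Real.sq_sqrt hnn, hyy]
      _ ≤ ybar ^ 2 := by
          have := Real.sqrt_nonneg (∑ i, (y t i)^2)
          nlinarith
  have qsum := qsum_le X y hlam T (ybar^2) hyT
  -- trace bound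
  have hxb2 : ∀ t ∈ Icc 1 T, ∑ j, (x t j)^2 ≤ xbar^2 := by
    intro t ht
    have hle : Real.sqrt (∑ j, (x t j)^2) ≤ xbar := by
      rw [hxbar]; exact Finset.le_sup' (fun t => Real.sqrt (∑ j, (x t j) ^ 2)) ht
    have hnn : (0:ℝ) ≤ ∑ j, (x t j)^2 := by positivity
    nlinarith [Real.sq_sqrt hnn, Real.sqrt_nonneg (∑ j, (x t j)^2)]
  have hSb2 : ∀ t ∈ Icc 1 T, ∑ i, ∑ l, (S t i l)^2 ≤ Sbar^2 := by
    intro t ht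
    have hle : Real.sqrt (∑ i, ∑ l, (S t i l)^2) ≤ Sbar := by
      rw [hSbar]; exact Finset.le_sup' (fun t => Real.sqrt (∑ i, ∑ l, (S t i l) ^ 2)) ht
    have hnn : (0:ℝ) ≤ ∑ i, ∑ l, (S t i l)^2 := by positivity
    nlinarith [Real.sq_sqrt hnn, Real.sqrt_nonneg (∑ i, ∑ l, (S t i l)^2)]
  have htrG : ∀ t ∈ Icc 1 T, ((X t)ᵀ * X t).trace ≤ xbar^2 * Sbar^2 := by
    intro t ht
    have heq : ((X t)ᵀ * X t).trace = (∑ j, (x t j)^2) * (∑ i, ∑ l, (S t i l)^2) := by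
      rw [trace_gram_eq, hX t ht]
      simp only [Matrix.of_apply, Fintype.sum_prod_type, mul_pow]
      calc ∑ x1, ∑ x2, ∑ x3, (x t x1)^2 * (S t x3 x2)^2
          = ∑ x1, (x t x1)^2 * (∑ i, ∑ l, (S t i l)^2) := by
            refine Finset.sum_congr rfl fun j _ => ?_
            rw [Finset.sum_comm]
            simp only [← Finset.mul_sum]
        _ = (∑ j, (x t j)^2) * (∑ i, ∑ l, (S t i l)^2) := by rw [← Finset.sum_mul]
    rw [heq]
    have h1 : (0:ℝ) ≤ ∑ i, ∑ l, (S t i l)^2 := by positivity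
    have h2 : (0:ℝ) ≤ xbar^2 := by positivity
    exact mul_le_mul (hxb2 t ht) (hSb2 t ht) h1 h2
  have htrA : (Amat lam X T).trace
      ≤ lam * (Fintype.card (Fin m × Fin d) : ℝ) + (T:ℝ) * (xbar^2 * Sbar^2) := by
    rw [Amat_trace]
    have h := Finset.sum_le_card_nsmul (Icc 1 T) _ (xbar^2 * Sbar^2) htrG
    rw [Nat.card_Icc, nsmul_eq_mul] at h
    have hc : ((T + 1 - 1 : ℕ) : ℝ) = (T:ℝ) := by norm_num
    rw [hc] at h
    linarith
  have hBnn : (0:ℝ) ≤ (T:ℝ) * (xbar^2 * Sbar^2) := by positivity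
  have hlog := logdet_final X hlam T ((T:ℝ)*(xbar^2*Sbar^2)) hBnn htrA
  have hcard : (Fintype.card (Fin m × Fin d) : ℝ) = (d:ℝ) * m := by
    simp only [Fintype.card_prod, Fintype.card_fin]
    push_cast
    ring
  have harg : 1 + (T:ℝ)*(xbar^2*Sbar^2) / ((Fintype.card (Fin m × Fin d) : ℝ) * lam)
      = 1 + (T:ℝ) * xbar^2 * Sbar^2 / ((d:ℝ) * m * lam) := by
    rw [hcard]
    ring_nf
  rw [harg] at hlog
  have hybar2 : (0:ℝ) ≤ ybar^2 := by positivity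
  have final1 : ∑ t ∈ Icc 1 T, qval lam X y t
      ≤ ybar^2 * ((Fintype.card (Fin m × Fin d) : ℝ)
          * Real.log (1 + (T:ℝ) * xbar^2 * Sbar^2 / ((d:ℝ) * m * lam))) :=
    qsum.trans (mul_le_mul_of_nonneg_left hlog hybar2)
  have hcard2 : ybar^2 * ((Fintype.card (Fin m × Fin d) : ℝ)
          * Real.log (1 + (T:ℝ) * xbar^2 * Sbar^2 / ((d:ℝ) * m * lam)))
      = (d : ℝ) * m * ybar ^ 2
          * Real.log (1 + (T : ℝ) * xbar ^ 2 * Sbar ^ 2 / ((d : ℝ) * m * lam)) := by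
    rw [hcard]; ring
  rw [hcard2] at final1
  linarith
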